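/- Let G be a finite group acting primitively on a finite set V with abelian (indeed cyclic) point stabilisers, and let K be the kernel of the action. Then either all point stabilisers are equal to K and G/K acts regularly on V with |V| prime, or distinct points have distinct stabilisers and G/K is a Frobenius group on V with K contained in the centre of G. -/

import Mathlib

open MulAction

/-- A group action is primitive if it is transitive and all its blocks are trivial. -/
def IsPrimitiveAction (G X : Type*) [Group G] [MulAction G X] : Prop :=
  MulAction.IsPretransitive G X ∧
    ∀ B : Set X, MulAction.IsBlock G B → B.Subsingleton ∨ B = Set.univ

section Aux
variable {G V : Type*} [Group G] [MulAction G V]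

lemma aux_comm {v : V} (hcyc : IsCyclic (stabilizer G v)) {a b : G}
    (ha : a ∈ stabilizer G v) (hb : b ∈ stabilizer G v) : a * b = b * a := by
  letI : CommGroup (stabilizer G v) := IsCyclic.commGroup
  have : (⟨a, ha⟩ * ⟨b, hb⟩ : stabilizer G v) = ⟨b, hb⟩ * ⟨a, ha⟩ := mul_comm _ _
  exact congrArg Subtype.val this

lemma aux_mem_ker {g : G} : g ∈ (MulAction.toPermHom G V).ker ↔ ∀ x : V, g • x = x := by
  simp [MonoidHom.mem_ker, Equiv.ext_iff, MulAction.toPermHom]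

lemma aux_max [IsPretransitive G V] (hprim : IsPrimitiveAction G V) (v : V)
    (M : Subgroup G) (hle : stabilizer G v ≤ M) : M = stabilizer G v ∨ M = ⊤ := by
  rcases hprim.2 (MulAction.orbit M v) (IsBlock.of_orbit hle) with h | h
  · left
    refine le_antisymm (fun m hm => ?_) hle
    have h1 : (⟨m, hm⟩ : M) • v ∈ MulAction.orbit M v := mem_orbit v _
    have := h h1 (mem_orbit_self v)
    simpa [mem_stabilizer_iff] using this
  · right
    have := stabilizer_orbit_eq hle
    rw [h] at this
    rw [← this]
    ext g
    simp [mem_stabilizer_iff, Set.smul_set_univ]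

lemma aux_mem_conj_map {g x : G} {S : Subgroup G} :
    x ∈ S.map (MulAut.conj g).toMonoidHom ↔ g⁻¹ * x * g ∈ S := by
  rw [Subgroup.mem_map_equiv]
  simp [MulAut.conj_symm_apply, mul_assoc]

lemma aux_conj_conj (g : G) (S : Subgroup G) :
    (S.map (MulAut.conj g).toMonoidHom).map (MulAut.conj g⁻¹).toMonoidHom = S := by
  ext x
  rw [aux_mem_conj_map, aux_mem_conj_map]
  group

lemma aux_conj_eq_iff (g : G) (S T : Subgroup G) :
    S.map (MulAut.conj g).toMonoidHom = T ↔ S = T.map (MulAut.conj g⁻¹).toMonoidHom := by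
  constructor
  · rintro rfl; exact (aux_conj_conj g S).symm
  · rintro rfl
    have := aux_conj_conj g⁻¹ T
    rwa [inv_inv] at this

lemma aux_map_conj_normal {K : Subgroup G} (hn : K.Normal) (g : G) :
    K.map (MulAut.conj g).toMonoidHom = K := by
  ext x
  rw [aux_mem_conj_map]
  constructor
  · intro h
    have h1 := hn.conj_mem _ h g
    have e : g * (g⁻¹ * x * g) * g⁻¹ = x := by group
    rwa [e] at h1
  · intro h
    have h1 := hn.conj_mem _ h g⁻¹
    rwa [inv_inv] at h1

end Aux

/-- Let `G` be a finite group acting primitively on `V` with cyclic point stabilisers, and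
let `K` be the kernel of the action.  Then either all point stabilisers equal `K`, `G/K`
acts regularly on `V` and `|V|` is prime, or distinct points have distinct stabilisers,
the stabiliser of any two distinct points is `K` (so `G/K` is a Frobenius group on `V`,
it being non-regular since some stabiliser exceeds `K`), and `K` is contained in the
centre of `G`. -/
theorem stmt11 (G V : Type*) [Group G] [Finite G] [MulAction G V] [Finite V]
    [Nontrivial V]
    (hprim : IsPrimitiveAction G V)
    (hcyc : ∀ v : V, IsCyclic (stabilizer G v))
    (K : Subgroup G) (hK : K = (MulAction.toPermHom G V).ker) :
    ((∀ v : V, stabilizer G v = K) ∧ (Nat.card V).Prime) ∨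
    ((∀ v w : V, v ≠ w → stabilizer G v ≠ stabilizer G w) ∧
      (∀ v w : V, v ≠ w → stabilizer G v ⊓ stabilizer G w = K) ∧
      (∃ v : V, K < stabilizer G v) ∧
      K ≤ Subgroup.center G) := by
  obtain ⟨htrans, hblocks⟩ := hprim
  have hprim' : IsPrimitiveAction G V := ⟨htrans, hblocks⟩
  have hKmem : ∀ g : G, g ∈ K ↔ ∀ x : V, g • x = x := by
    intro g; rw [hK]; exact aux_mem_ker
  have hKle : ∀ v : V, K ≤ stabilizer G v := fun v g hg =>
    mem_stabilizer_iff.2 ((hKmem g).1 hg v)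
  have hKnormal : K.Normal := by rw [hK]; exact MonoidHom.normal_ker _
  have hnt : ∀ v : V, stabilizer G v ≠ ⊤ := by
    intro v h
    obtain ⟨w, hw⟩ := exists_ne v
    obtain ⟨g, hg⟩ := htrans.exists_smul_eq v w
    exact hw (hg ▸ (h ▸ Subgroup.mem_top g : g ∈ stabilizer G v))
  have hconj : ∀ (g : G) (v : V),
      stabilizer G (g • v) = (stabilizer G v).map (MulAut.conj g).toMonoidHom :=
    fun g v => stabilizer_smul_eq_stabilizer_map_conj g v
  by_cases hall : ∀ v : V, stabilizer G v = K
  · left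
    refine ⟨hall, ?_⟩
    obtain ⟨v⟩ := (inferInstance : Nonempty V)
    have hcard : Nat.card V = Nat.card (G ⧸ K) := by
      calc Nat.card V = Nat.card (MulAction.orbit G v) := by
            rw [MulAction.orbit_eq_univ]
            exact (Nat.card_congr (Equiv.Set.univ V)).symm
        _ = Nat.card (G ⧸ stabilizer G v) :=
            Nat.card_congr (MulAction.orbitEquivQuotientStabilizer G v)
        _ = Nat.card (G ⧸ K) := by rw [hall v]
    have h1 : 1 < Nat.card V := Finite.one_lt_card
    obtain ⟨p, hp, hdvd⟩ := Nat.exists_prime_and_dvd (n := Nat.card (G ⧸ K)) (by omega)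
    haveI : Fact p.Prime := ⟨hp⟩
    obtain ⟨x, hx⟩ := exists_prime_orderOf_dvd_card' (G := G ⧸ K) p hdvd
    set M : Subgroup G := (Subgroup.zpowers x).comap (QuotientGroup.mk' K) with hM
    have hKM : stabilizer G v ≤ M := by
      rw [hall v]
      intro k hk
      simp only [hM, Subgroup.mem_comap, QuotientGroup.mk'_apply]
      rw [(QuotientGroup.eq_one_iff k).2 hk]
      exact one_mem _
    have hmapM : M.map (QuotientGroup.mk' K) = Subgroup.zpowers x :=
      Subgroup.map_comap_eq_self_of_surjective (QuotientGroup.mk'_surjective K) _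
    rcases aux_max hprim' v M hKM with h | h
    · exfalso
      rw [h, hall v] at hmapM
      have : x ∈ K.map (QuotientGroup.mk' K) := hmapM ▸ Subgroup.mem_zpowers x
      obtain ⟨k, hk, rfl⟩ := this
      have : (QuotientGroup.mk' K) k = 1 := (QuotientGroup.eq_one_iff k).2 hk
      rw [this, orderOf_one] at hx
      exact hp.ne_one hx.symm
    · rw [h] at hmapM
      have htop : Subgroup.zpowers x = ⊤ := by
        rw [← hmapM]
        exact Subgroup.map_top_of_surjective _ (QuotientGroup.mk'_surjective K)
      have : Nat.card (G ⧸ K) = p := by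
        rw [← hx, ← Nat.card_zpowers, htop]
        exact (Nat.card_congr Subgroup.topEquiv.toEquiv).symm
      rw [hcard, this]
      exact hp
  · right
    have hlt : ∀ v : V, K < stabilizer G v := by
      intro v
      refine lt_of_le_of_ne (hKle v) (Ne.symm ?_)
      intro hvK
      apply hall
      intro w
      obtain ⟨g, hg⟩ := htrans.exists_smul_eq v w
      rw [← hg, hconj g v, hvK, aux_map_conj_normal hKnormal]
    have h_ne : ∀ v w : V, v ≠ w → stabilizer G v ≠ stabilizer G w := by
      intro v w hvw hEq
      have hB : IsBlock G {x : V | stabilizer G x = stabilizer G v} := by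
        rw [isBlock_iff_smul_eq_of_mem]
        intro g a haB hgaB
        have ha : stabilizer G a = stabilizer G v := haB
        have hga : stabilizer G (g • a) = stabilizer G v := hgaB
        have hfix : (stabilizer G v).map (MulAut.conj g).toMonoidHom = stabilizer G v := by
          rw [← ha, ← hconj g a, hga]
          exact ha.symm
        ext x
        rw [Set.mem_smul_set_iff_inv_smul_mem]
        show stabilizer G (g⁻¹ • x) = stabilizer G v ↔ stabilizer G x = stabilizer G v
        rw [hconj g⁻¹ x, aux_conj_eq_iff, inv_inv, hfix]
      rcases hblocks _ hB with h | h
      · exact hvw (h (show _ = _ from rfl) (show stabilizer G w = _ from hEq.symm))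
      · refine (hlt v).not_ge (fun k hk => ?_)
        refine (hKmem k).2 (fun x => ?_)
        have hx : stabilizer G x = stabilizer G v := by
          have hm : x ∈ {x : V | stabilizer G x = stabilizer G v} := by rw [h]; trivial
          exact hm
        exact mem_stabilizer_iff.1 (hx ▸ hk)
    have h_inf : ∀ v w : V, v ≠ w → stabilizer G v ⊓ stabilizer G w = K := by
      intro v w hvw
      set D := stabilizer G v ⊓ stabilizer G w with hD
      have hDle : ∀ u : V, D ≤ stabilizer G u → stabilizer G u ≤ Subgroup.normalizer (D : Set G) := by
        intro u hle h hh
        rw [Subgroup.mem_normalizer_iff]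
        intro k
        constructor
        · intro hk
          have e : h * k * h⁻¹ = k := by
            rw [aux_comm (hcyc u) hh (hle hk), mul_assoc, mul_inv_cancel, mul_one]
          rwa [e]
        · intro hk
          have hkst : k ∈ stabilizer G u := by
            have h1 := (stabilizer G u).mul_mem ((stabilizer G u).mul_mem
              ((stabilizer G u).inv_mem hh) (hle hk)) hh
            have e : h⁻¹ * (h * k * h⁻¹) * h = k := by group
            rwa [e] at h1
          have e : h * k * h⁻¹ = k := by
            rw [aux_comm (hcyc u) hh hkst, mul_assoc, mul_inv_cancel, mul_one]
          rwa [e] at hk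
      have hnorm : D.Normal := by
        rw [← Subgroup.normalizer_eq_top_iff]
        rcases aux_max hprim' v (Subgroup.normalizer (D : Set G)) (hDle v inf_le_left) with h | h
        · exfalso
          have hle2 : stabilizer G w ≤ stabilizer G v := h ▸ hDle w inf_le_right
          rcases aux_max hprim' w (stabilizer G v) hle2 with h2 | h2
          · exact h_ne v w hvw h2
          · exact hnt v h2
        · exact h
      refine le_antisymm (fun d hd => ?_) (le_inf (hKle v) (hKle w))
      refine (hKmem d).2 (fun x => ?_)
      obtain ⟨g, hg⟩ := htrans.exists_smul_eq v x
      have hmem : g⁻¹ * d * g ∈ D := by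
        have h1 := hnorm.conj_mem d hd g⁻¹
        rwa [inv_inv] at h1
      have hfix : (g⁻¹ * d * g) • v = v := hmem.1
      have hdg : d • g • v = (g * (g⁻¹ * d * g)) • v := by
        rw [smul_smul]; congr 1; group
      rw [← hg, hdg, mul_smul, hfix]
    refine ⟨h_ne, h_inf, ⟨Classical.arbitrary V, hlt _⟩, ?_⟩
    intro k hk
    obtain ⟨v, w, hvw⟩ := exists_pair_ne V
    have hcent : ∀ u : V, stabilizer G u ≤ Subgroup.centralizer {k} := by
      intro u h hh
      rw [Subgroup.mem_centralizer_iff]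
      rintro y ⟨rfl⟩
      exact aux_comm (hcyc u) (hKle u hk) hh
    have hsup : stabilizer G v ⊔ stabilizer G w = ⊤ := by
      rcases aux_max hprim' v (stabilizer G v ⊔ stabilizer G w) le_sup_left with h | h
      · exfalso
        have hle2 : stabilizer G w ≤ stabilizer G v := h ▸ le_sup_right
        rcases aux_max hprim' w (stabilizer G v) hle2 with h2 | h2
        · exact h_ne v w hvw h2
        · exact hnt v h2
      · exact h
    have htot : (⊤ : Subgroup G) ≤ Subgroup.centralizer {k} := by
      rw [← hsup]
      exact sup_le (hcent v) (hcent w)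
    rw [Subgroup.mem_center_iff]
    intro g
    exact (htot (Subgroup.mem_top g) k rfl).symm
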